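/- The function u(x) = e^{1+x}·erfc(√(1+x)) satisfies u(x) + D^{1/2}u(x) = 1/(√π·√(1+x)) for all x ∈ (−1,1), where D^{1/2} is the left-sided Riemann–Liouville half-derivative based at −1. -/

import Mathlib

open Real intervalIntegral

/-- Ultraspherical (Gegenbauer) polynomials via the three-term recurrence
`(n+1) C_{n+1} = 2(n+λ) x C_n − (n+2λ−1) C_{n−1}`, `C_0 = 1`, `C_{-1} = 0`. -/
noncomputable def Geg (l : ℝ) : ℕ → ℝ → ℝ
  | 0, _ => 1
  | 1, x => 2 * l * x
  | (n + 2), x =>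
      (2 * ((n : ℝ) + 1 + l) * x * Geg l (n + 1) x
        - ((n : ℝ) + 2 * l) * Geg l n x) / ((n : ℝ) + 2)

/-- Ultraspherical polynomials with integer index, zero for negative index. -/
noncomputable def GegZ (l : ℝ) (n : ℤ) (x : ℝ) : ℝ :=
  if 0 ≤ n then Geg l n.toNat x else 0

/-- The complementary error function `erfc z = (2/√π) ∫_z^∞ e^{−s²} ds`. -/
noncomputable def erfc (z : ℝ) : ℝ :=
  (2 / Real.sqrt π) * ∫ s in Set.Ioi z, Real.exp (-s ^ 2)

open MeasureTheory Set

lemma erfc_def' (z : ℝ) : erfc z = (2 / Real.sqrt π) * ∫ s in Set.Ioi z, Real.exp (-s ^ 2) := rfl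

lemma gauss_integrable : Integrable (fun s : ℝ => Real.exp (-s^2)) := by
  simpa using integrable_exp_neg_mul_sq one_pos

lemma gauss_Ioi_zero : ∫ s in Set.Ioi (0:ℝ), Real.exp (-s^2) = Real.sqrt π / 2 := by
  simpa using integral_gaussian_Ioi 1

lemma gauss_split {c : ℝ} (hc : 0 ≤ c) :
    ∫ s in Set.Ioi c, Real.exp (-s^2)
      = Real.sqrt π / 2 - ∫ s in Set.Ioc 0 c, Real.exp (-s^2) := by
  have h : ∫ s in Set.Ioi (0:ℝ), Real.exp (-s^2)
      = (∫ s in Set.Ioc 0 c, Real.exp (-s^2)) + ∫ s in Set.Ioi c, Real.exp (-s^2) := by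
    rw [← Set.Ioc_union_Ioi_eq_Ioi hc]
    exact setIntegral_union (Set.Ioc_disjoint_Ioi le_rfl) measurableSet_Ioi
      gauss_integrable.integrableOn gauss_integrable.integrableOn
  rw [gauss_Ioi_zero] at h
  linarith


lemma gauss_moment (c β : ℝ) (hc : 0 < c) :
    ∫ τ in (0:ℝ)..β, τ * Real.exp (-(c*τ^2)) = (1 - Real.exp (-(c*β^2)))/(2*c) := by
  have hd : ∀ τ : ℝ, HasDerivAt (fun t => -Real.exp (-(c*t^2))/(2*c))
      (τ * Real.exp (-(c*τ^2))) τ := by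
    intro τ
    have h1 : HasDerivAt (fun t : ℝ => -(c*t^2)) (-(c*(2*τ))) τ := by
      simpa using! ((hasDerivAt_pow 2 τ).const_mul c).neg
    have h2 := (h1.exp).neg.div_const (2*c)
    refine h2.congr_deriv ?_
    field_simp
  rw [intervalIntegral.integral_eq_sub_of_hasDerivAt (fun τ _ => hd τ)
    (by apply Continuous.intervalIntegrable; continuity)]
  field_simp
  simp; ring

lemma quarter (R : ℝ) (hR : 0 < R) :
    ∫ τ in Set.Ioo 0 R,
        Real.exp (-τ^2) * ∫ s in Set.Ioc 0 (Real.sqrt (R^2 - τ^2)), Real.exp (-s^2)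
      = π/4 * (1 - Real.exp (-R^2)) := by
  set S : Set (ℝ×ℝ) := {p | 0 < p.1 ∧ 0 < p.2 ∧ p.1^2*(1+p.2^2) < R^2} with hS
  set Hf : ℝ → ℝ → ℝ :=
    fun τ u => Set.indicator S (fun p => p.1 * Real.exp (-(p.1^2*(1+p.2^2)))) (τ,u) with hHf
  have hSopen : IsOpen S := by
    rw [hS, Set.setOf_and, Set.setOf_and]
    exact (isOpen_lt continuous_const continuous_fst).inter
      ((isOpen_lt continuous_const continuous_snd).inter
        (isOpen_lt (by fun_prop) continuous_const))
  have hSm : MeasurableSet S := hSopen.measurableSet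
  have hfc : Continuous (fun p : ℝ×ℝ => p.1 * Real.exp (-(p.1^2*(1+p.2^2)))) := by fun_prop
  have measT : ∀ τ : ℝ, MeasurableSet {u : ℝ | (τ,u) ∈ S} :=
    fun τ => hSm.preimage measurable_prodMk_left
  have measU : ∀ u : ℝ, MeasurableSet {τ : ℝ | (τ,u) ∈ S} :=
    fun u => hSm.preimage measurable_prodMk_right
  have hfsecp : ∀ τ u : ℝ, Hf τ u
      = Set.indicator {u | (τ,u) ∈ S} (fun u => τ * Real.exp (-(τ^2*(1+u^2)))) u := by
    intro τ u
    show S.indicator (fun p => p.1 * Real.exp (-(p.1^2*(1+p.2^2)))) (τ,u) = _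
    by_cases h : (τ,u) ∈ S
    · rw [Set.indicator_of_mem h, Set.indicator_of_mem (show u ∈ {u | (τ,u) ∈ S} from h)]
    · rw [Set.indicator_of_notMem h,
        Set.indicator_of_notMem (show u ∉ {u | (τ,u) ∈ S} from h)]
  have hfsec : ∀ τ : ℝ, (fun u => Hf τ u)
      = Set.indicator {u | (τ,u) ∈ S} (fun u => τ * Real.exp (-(τ^2*(1+u^2)))) :=
    fun τ => funext fun u => hfsecp τ u
  have hfsec2p : ∀ τ u : ℝ, Hf τ u
      = Set.indicator {τ | (τ,u) ∈ S} (fun τ => τ * Real.exp (-(τ^2*(1+u^2)))) τ := by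
    intro τ u
    show S.indicator (fun p => p.1 * Real.exp (-(p.1^2*(1+p.2^2)))) (τ,u) = _
    by_cases h : (τ,u) ∈ S
    · rw [Set.indicator_of_mem h, Set.indicator_of_mem (show τ ∈ {τ | (τ,u) ∈ S} from h)]
    · rw [Set.indicator_of_notMem h,
        Set.indicator_of_notMem (show τ ∉ {τ | (τ,u) ∈ S} from h)]
  have hfsec2 : ∀ u : ℝ, (fun τ => Hf τ u)
      = Set.indicator {τ | (τ,u) ∈ S} (fun τ => τ * Real.exp (-(τ^2*(1+u^2)))) :=
    fun u => funext fun τ => hfsec2p τ u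
  have hT1 : ∀ τ ∈ Set.Ioo (0:ℝ) R,
      {u : ℝ | (τ,u) ∈ S} = Set.Ioo 0 (Real.sqrt (R^2 - τ^2) / τ) := by
    rintro τ ⟨hτ0, hτR⟩
    have hc2 : 0 < R^2 - τ^2 := by nlinarith
    have hc0 : 0 < Real.sqrt (R^2 - τ^2) := Real.sqrt_pos.2 hc2
    have hcsq : (Real.sqrt (R^2 - τ^2))^2 = R^2 - τ^2 := Real.sq_sqrt hc2.le
    ext u
    simp only [hS, Set.mem_setOf_eq, Set.mem_Ioo]
    constructor
    · rintro ⟨-, hu0, hlt⟩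
      refine ⟨hu0, ?_⟩
      rw [lt_div_iff₀ hτ0]
      have h1 : (u*τ)^2 < R^2 - τ^2 := by nlinarith
      have := Real.sqrt_lt_sqrt (by positivity) h1
      rwa [Real.sqrt_sq (by positivity)] at this
    · rintro ⟨hu0, hub⟩
      refine ⟨hτ0, hu0, ?_⟩
      rw [lt_div_iff₀ hτ0] at hub
      have h2 : (u*τ)^2 < (Real.sqrt (R^2 - τ^2))^2 := by
        apply sq_lt_sq' _ hub
        nlinarith [mul_pos hu0 hτ0]
      rw [hcsq] at h2
      nlinarith
  have hT0 : ∀ τ : ℝ, τ ∉ Set.Ioo (0:ℝ) R → {u : ℝ | (τ,u) ∈ S} = ∅ := by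
    intro τ hτ
    rw [Set.mem_Ioo, not_and_or, not_lt, not_lt] at hτ
    ext u
    simp only [hS, Set.mem_setOf_eq, Set.mem_empty_iff_false, iff_false]
    rintro ⟨h1, h2, h3⟩
    rcases hτ with h | h
    · exact absurd h1 (not_lt.2 h)
    · nlinarith
  have hU1 : ∀ u : ℝ, 0 < u →
      {τ : ℝ | (τ,u) ∈ S} = Set.Ioo 0 (R / Real.sqrt (1+u^2)) := by
    intro u hu
    have h1u : (0:ℝ) < 1 + u^2 := by positivity
    have hsu : 0 < Real.sqrt (1+u^2) := Real.sqrt_pos.2 h1u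
    have hsq : (Real.sqrt (1+u^2))^2 = 1+u^2 := Real.sq_sqrt h1u.le
    ext τ
    simp only [hS, Set.mem_setOf_eq, Set.mem_Ioo]
    constructor
    · rintro ⟨hτ0, -, hlt⟩
      refine ⟨hτ0, ?_⟩
      rw [lt_div_iff₀ hsu]
      have h1 : (τ * Real.sqrt (1+u^2))^2 < R^2 := by
        rw [mul_pow, hsq]; nlinarith
      have := Real.sqrt_lt_sqrt (by positivity) h1
      rwa [Real.sqrt_sq (by positivity), Real.sqrt_sq hR.le] at this
    · rintro ⟨hτ0, hub⟩
      refine ⟨hτ0, hu, ?_⟩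
      rw [lt_div_iff₀ hsu] at hub
      have h2 : (τ * Real.sqrt (1+u^2))^2 < R^2 := by
        apply sq_lt_sq' _ hub
        nlinarith [mul_pos hτ0 hsu]
      rw [mul_pow, hsq] at h2
      nlinarith
  have hU0 : ∀ u : ℝ, ¬ (0 < u) → {τ : ℝ | (τ,u) ∈ S} = ∅ := by
    intro u hu
    ext τ
    simp only [hS, Set.mem_setOf_eq, Set.mem_empty_iff_false, iff_false]
    rintro ⟨-, h2, -⟩
    exact hu h2
  -- integrability of sections
  have hsecInt : ∀ τ : ℝ, Integrable (fun u => Hf τ u) := by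
    intro τ
    rw [hfsec τ]
    by_cases hτ : 0 < τ
    · refine Integrable.indicator ?_ (measT τ)
      have heq : (fun u : ℝ => τ * Real.exp (-(τ^2*(1+u^2))))
          = fun u => (τ * Real.exp (-τ^2)) * Real.exp (-(τ^2) * u^2) := by
        funext u
        rw [mul_assoc, ← Real.exp_add]
        ring_nf
      rw [heq]
      exact (integrable_exp_neg_mul_sq (by positivity)).const_mul _
    · have : {u : ℝ | (τ,u) ∈ S} = ∅ := by
        ext u
        simp only [hS, Set.mem_setOf_eq, Set.mem_empty_iff_false, iff_false]
        rintro ⟨h1, -, -⟩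
        exact hτ h1
      rw [this, Set.indicator_empty]
      exact integrable_zero _ _ _
  have h1f : AEStronglyMeasurable (Function.uncurry Hf) (volume.prod volume) := by
    have : Function.uncurry Hf
        = Set.indicator S (fun p => p.1 * Real.exp (-(p.1^2*(1+p.2^2)))) := by
      funext p; rw [Function.uncurry, hHf]
    rw [this]
    exact hfc.aestronglyMeasurable.indicator hSm
  have hInt : Integrable (Function.uncurry Hf) (volume.prod volume) := by
    refine (integrable_prod_iff h1f).2 ⟨Filter.Eventually.of_forall hsecInt, ?_⟩
    have hbd : Integrable (Set.indicator (Set.Ioo (0:ℝ) R) (fun _ => R)) := by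
      refine (integrable_indicator_iff measurableSet_Ioo).2 ?_
      exact integrableOn_const measure_Ioo_lt_top.ne
    refine Integrable.mono' hbd ?_ ?_
    · exact h1f.norm.integral_prod_right'
    · filter_upwards with τ
      show ‖∫ u, ‖Hf τ u‖‖ ≤ Set.indicator (Set.Ioo (0:ℝ) R) (fun _ => R) τ
      by_cases hτ : τ ∈ Set.Ioo (0:ℝ) R
      · rw [Real.norm_of_nonneg (integral_nonneg fun u => norm_nonneg _),
          Set.indicator_of_mem hτ]
        set c := Real.sqrt (R^2 - τ^2) with hc
        have hτ0 := hτ.1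
        have hcb : c ≤ R := by
          have h2 := Real.sqrt_le_sqrt (show R^2 - τ^2 ≤ R^2 by nlinarith [hτ.1])
          rwa [Real.sqrt_sq hR.le] at h2
        have hc0 : 0 ≤ c := Real.sqrt_nonneg _
        have hbound : ∀ u : ℝ, ‖Hf τ u‖
            ≤ Set.indicator (Set.Ioo 0 (c/τ)) (fun _ => τ) u := by
          intro u
          rw [hfsecp τ u, hT1 τ hτ, ← hc]
          by_cases hu : u ∈ Set.Ioo 0 (c/τ)
          · rw [Set.indicator_of_mem hu, Set.indicator_of_mem hu,
              Real.norm_of_nonneg (by positivity)]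
            have : Real.exp (-(τ^2*(1+u^2))) ≤ 1 := Real.exp_le_one_iff.2 (by nlinarith [sq_nonneg u])
            nlinarith
          · rw [Set.indicator_of_notMem hu, Set.indicator_of_notMem hu]
            simp
        calc ∫ u, ‖Hf τ u‖
            ≤ ∫ u, Set.indicator (Set.Ioo 0 (c/τ)) (fun _ => τ) u :=
              integral_mono (hsecInt τ).norm
                ((integrable_indicator_iff measurableSet_Ioo).2
                  (integrableOn_const measure_Ioo_lt_top.ne)) hbound
          _ = τ * (c/τ) := by
              rw [MeasureTheory.integral_indicator measurableSet_Ioo, setIntegral_const, smul_eq_mul,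
                measureReal_def, Real.volume_Ioo, sub_zero, ENNReal.toReal_ofReal (by positivity)]
              ring
          _ ≤ R := by rw [mul_div_cancel₀ _ (ne_of_gt hτ0)]; exact hcb
      · have h0 : ∀ u, Hf τ u = 0 := by
          intro u; rw [hfsecp τ u, hT0 τ hτ]; simp
        simp only [h0, norm_zero, MeasureTheory.integral_zero]
        exact Set.indicator_nonneg (fun _ _ => hR.le) τ
  -- per-τ identity
  have hQ1 : ∀ τ ∈ Set.Ioo (0:ℝ) R,
      Real.exp (-τ^2) * (∫ s in Set.Ioc 0 (Real.sqrt (R^2 - τ^2)), Real.exp (-s^2))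
        = ∫ u, Hf τ u := by
    rintro τ hτm
    obtain ⟨hτ0, hτR⟩ := hτm
    set c := Real.sqrt (R^2 - τ^2) with hc
    have hc0 : 0 ≤ c := Real.sqrt_nonneg _
    have hcd : 0 ≤ c / τ := by positivity
    rw [hfsec τ, MeasureTheory.integral_indicator (measT τ), hT1 τ ⟨hτ0, hτR⟩, ← hc]
    have heq : ∀ u ∈ Set.Ioo (0:ℝ) (c/τ), τ * Real.exp (-(τ^2*(1+u^2)))
        = (τ * Real.exp (-τ^2)) * Real.exp (-(τ*u)^2) := by
      intro u _
      rw [mul_assoc, ← Real.exp_add]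
      ring_nf
    rw [setIntegral_congr_fun measurableSet_Ioo heq, MeasureTheory.integral_const_mul,
      ← integral_Ioc_eq_integral_Ioo, ← intervalIntegral.integral_of_le hcd]
    have hsub := intervalIntegral.integral_comp_mul_left (a := (0:ℝ)) (b := c/τ)
      (fun s => Real.exp (-s^2)) (ne_of_gt hτ0)
    simp only [mul_zero] at hsub
    rw [hsub, mul_div_cancel₀ _ (ne_of_gt hτ0), smul_eq_mul,
      intervalIntegral.integral_of_le hc0, integral_Ioc_eq_integral_Ioo]
    rw [← integral_Ioc_eq_integral_Ioo]
    field_simp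
  have hQ2 : ∀ τ : ℝ, τ ∉ Set.Ioo (0:ℝ) R → (∫ u, Hf τ u) = 0 := by
    intro τ hτ
    rw [hfsec τ, hT0 τ hτ, Set.indicator_empty]
    simp
  have hU : ∀ u : ℝ, (∫ τ, Hf τ u)
      = Set.indicator (Set.Ioi (0:ℝ))
          (fun u => (1 - Real.exp (-R^2)) / 2 * (1+u^2)⁻¹) u := by
    intro u
    by_cases hu : 0 < u
    · rw [Set.indicator_of_mem (Set.mem_Ioi.2 hu), hfsec2 u, MeasureTheory.integral_indicator (measU u),
        hU1 u hu]
      have h1u : (0:ℝ) < 1 + u^2 := by positivity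
      have hsu : 0 < Real.sqrt (1+u^2) := Real.sqrt_pos.2 h1u
      set β := R / Real.sqrt (1+u^2) with hβ
      have hβ0 : 0 ≤ β := by positivity
      have heq : ∀ τ ∈ Set.Ioo (0:ℝ) β, τ * Real.exp (-(τ^2*(1+u^2)))
          = τ * Real.exp (-((1+u^2)*τ^2)) := by
        intro τ _; ring_nf
      rw [setIntegral_congr_fun measurableSet_Ioo heq, ← integral_Ioc_eq_integral_Ioo,
        ← intervalIntegral.integral_of_le hβ0, gauss_moment _ _ h1u]
      have hββ : (1+u^2) * β^2 = R^2 := by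
        rw [hβ, div_pow, Real.sq_sqrt h1u.le]
        field_simp
      rw [hββ]
      field_simp
    · rw [Set.indicator_of_notMem (by simpa using hu)]
      have h0 : (fun τ => Hf τ u) = fun _ => 0 := by
        rw [hfsec2 u, hU0 u hu, Set.indicator_empty]
      rw [h0]
      simp
  calc ∫ τ in Set.Ioo 0 R,
        Real.exp (-τ^2) * ∫ s in Set.Ioc 0 (Real.sqrt (R^2 - τ^2)), Real.exp (-s^2)
      = ∫ τ in Set.Ioo 0 R, ∫ u, Hf τ u := setIntegral_congr_fun measurableSet_Ioo hQ1
    _ = ∫ τ, ∫ u, Hf τ u := setIntegral_eq_integral_of_forall_compl_eq_zero hQ2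
    _ = ∫ u, ∫ τ, Hf τ u := integral_integral_swap hInt
    _ = ∫ u, Set.indicator (Set.Ioi (0:ℝ))
          (fun u => (1 - Real.exp (-R^2)) / 2 * (1+u^2)⁻¹) u := by
        exact integral_congr_ae (Filter.Eventually.of_forall hU)
    _ = ∫ u in Set.Ioi (0:ℝ), (1 - Real.exp (-R^2)) / 2 * (1+u^2)⁻¹ :=
        MeasureTheory.integral_indicator measurableSet_Ioi
    _ = (1 - Real.exp (-R^2)) / 2 * ∫ u in Set.Ioi (0:ℝ), (1+u^2)⁻¹ := integral_const_mul _ _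
    _ = π/4 * (1 - Real.exp (-R^2)) := by
        rw [integral_Ioi_inv_one_add_sq, Real.arctan_zero]
        ring


lemma hasDerivAt_erfc {z : ℝ} (hz : 0 < z) :
    HasDerivAt erfc (-(2 / Real.sqrt π) * Real.exp (-z^2)) z := by
  have heq : ∀ w ∈ Set.Ioi (0:ℝ), erfc w
      = (2 / Real.sqrt π) * (Real.sqrt π / 2 - ∫ s in (0:ℝ)..w, Real.exp (-s^2)) := by
    intro w hw
    rw [erfc, gauss_split (le_of_lt hw), intervalIntegral.integral_of_le (le_of_lt hw),
      integral_Ioc_eq_integral_Ioo, ← integral_Ioc_eq_integral_Ioo]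
  have hD : HasDerivAt (fun w => (2 / Real.sqrt π) *
      (Real.sqrt π / 2 - ∫ s in (0:ℝ)..w, Real.exp (-s^2)))
      (-(2 / Real.sqrt π) * Real.exp (-z^2)) z := by
    have h1 : HasDerivAt (fun w => ∫ s in (0:ℝ)..w, Real.exp (-s^2)) (Real.exp (-z^2)) z :=
      intervalIntegral.integral_hasDerivAt_right gauss_integrable.intervalIntegrable
        gauss_integrable.aestronglyMeasurable.stronglyMeasurableAtFilter
        (by continuity : Continuous fun s : ℝ => Real.exp (-s^2)).continuousAt
    have := ((h1.const_sub (Real.sqrt π / 2)).const_mul (2 / Real.sqrt π))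
    refine this.congr_deriv ?_
    ring
  exact hD.congr_of_eventuallyEq <|
    Filter.eventuallyEq_of_mem (isOpen_Ioi.mem_nhds hz) heq


lemma key (y : ℝ) (hy : (-1:ℝ) < y) :
    (1 / Real.sqrt π) *
        ∫ t in (-1 : ℝ)..y, Real.exp (1 + t) * erfc (Real.sqrt (1 + t)) / Real.sqrt (y - t)
      = 1 - Real.exp (1 + y) * erfc (Real.sqrt (1 + y)) := by
  have h1y : (0:ℝ) < 1 + y := by linarith
  set R := Real.sqrt (1+y) with hRdef
  have hR0 : 0 < R := Real.sqrt_pos.2 h1y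
  have hR2 : R^2 = 1 + y := Real.sq_sqrt h1y.le
  have hπ0 : 0 < Real.sqrt π := Real.sqrt_pos.2 pi_pos
  have hππ : Real.sqrt π * Real.sqrt π = π := Real.mul_self_sqrt pi_pos.le
  set W : ℝ → ℝ := fun τ => ∫ s in Set.Ioc 0 (Real.sqrt (R^2 - τ^2)), Real.exp (-s^2) with hWdef
  -- image of the substitution
  have himg : (fun τ : ℝ => y - τ^2) '' Set.Ioo 0 R = Set.Ioo (-1) y := by
    ext t
    constructor
    · rintro ⟨τ, ⟨hτ0, hτR⟩, rfl⟩
      have h1 : τ^2 < R^2 := by nlinarith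
      have h2 : 0 < τ^2 := by positivity
      simp only
      constructor <;> nlinarith
    · rintro ⟨ht1, ht2⟩
      refine ⟨Real.sqrt (y - t), ⟨?_, ?_⟩, ?_⟩
      · exact Real.sqrt_pos.2 (by linarith)
      · exact Real.sqrt_lt_sqrt (by linarith) (by linarith)
      · simp only
        rw [Real.sq_sqrt (show (0:ℝ) ≤ y - t by linarith)]; ring
  have hcv : (∫ t in Set.Ioo (-1:ℝ) y,
        Real.exp (1 + t) * erfc (Real.sqrt (1 + t)) / Real.sqrt (y - t))
      = ∫ τ in Set.Ioo (0:ℝ) R, |(-(2*τ))| •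
          (Real.exp (1 + (y - τ^2)) * erfc (Real.sqrt (1 + (y - τ^2)))
            / Real.sqrt (y - (y - τ^2))) := by
    rw [← himg]
    apply integral_image_eq_integral_abs_deriv_smul measurableSet_Ioo
    · intro τ _
      have h : HasDerivAt (fun τ : ℝ => y - τ^2) (-(2*τ)) τ := by
        simpa using ((hasDerivAt_pow 2 τ).const_sub y)
      exact h.hasDerivWithinAt
    · intro a ha b hb hab
      simp only at hab
      have h : a^2 = b^2 := by linarith
      have h2 := Real.sqrt_sq ha.1.le ▸ Real.sqrt_sq hb.1.le ▸ congrArg Real.sqrt h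
      simpa [Real.sqrt_sq ha.1.le, Real.sqrt_sq hb.1.le] using h2
  have hpt : ∀ τ ∈ Set.Ioo (0:ℝ) R, |(-(2*τ))| •
          (Real.exp (1 + (y - τ^2)) * erfc (Real.sqrt (1 + (y - τ^2)))
            / Real.sqrt (y - (y - τ^2)))
      = 2*Real.exp (1+y)*Real.exp (-τ^2)
          - 4/Real.sqrt π*Real.exp (1+y)*(Real.exp (-τ^2) * W τ) := by
    rintro τ ⟨hτ0, hτR⟩
    have h1 : y - (y - τ^2) = τ^2 := by ring
    have h2 : 1 + (y - τ^2) = R^2 - τ^2 := by rw [hR2]; ring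
    have hsτ : Real.sqrt (τ^2) = τ := Real.sqrt_sq hτ0.le
    have habs : |(-(2*τ))| = 2*τ := by rw [abs_neg, abs_of_pos (by linarith)]
    have herfc : erfc (Real.sqrt (R^2 - τ^2))
        = (2 / Real.sqrt π) * (Real.sqrt π / 2 - W τ) := by
      rw [erfc_def', gauss_split (Real.sqrt_nonneg _), hWdef]
    have hexp2 : Real.exp (R^2 - τ^2) = Real.exp (1+y) * Real.exp (-τ^2) := by
      rw [hR2, ← Real.exp_add]; ring_nf
    rw [h1, h2, hsτ, habs, herfc, hexp2, smul_eq_mul]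
    field_simp
    ring
  have hWc : Continuous W := by
    have h1 : Continuous (fun b : ℝ => ∫ s in (0:ℝ)..b, Real.exp (-s^2)) :=
      intervalIntegral.continuous_primitive
        (fun a b => gauss_integrable.intervalIntegrable) 0
    have h2 : Continuous fun τ : ℝ => Real.sqrt (R^2 - τ^2) := by fun_prop
    have h3 : W = fun τ => ∫ s in (0:ℝ)..(Real.sqrt (R^2 - τ^2)), Real.exp (-s^2) := by
      funext τ
      rw [hWdef, intervalIntegral.integral_of_le (Real.sqrt_nonneg _)]
    rw [h3]
    exact h1.comp h2
  have hint1 : IntegrableOn (fun τ : ℝ => 2*Real.exp (1+y)*Real.exp (-τ^2))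
      (Set.Ioo 0 R) := ((gauss_integrable.const_mul _).integrableOn)
  have hint2 : IntegrableOn
      (fun τ : ℝ => 4/Real.sqrt π*Real.exp (1+y)*(Real.exp (-τ^2) * W τ))
      (Set.Ioo 0 R) := by
    have hc : Continuous (fun τ : ℝ => 4/Real.sqrt π*Real.exp (1+y)*(Real.exp (-τ^2) * W τ)) :=
      continuous_const.mul ((by continuity : Continuous fun τ : ℝ => Real.exp (-τ^2)).mul hWc)
    exact ((hc.continuousOn).integrableOn_compact
      (isCompact_Icc (a := (0:ℝ)) (b := R))).mono_set Ioo_subset_Icc_self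
  -- the A integral
  have hA : ∫ τ in Set.Ioo (0:ℝ) R, Real.exp (-τ^2)
      = Real.sqrt π / 2 - Real.sqrt π / 2 * erfc R := by
    have h := gauss_split hR0.le
    rw [erfc_def', h]
    rw [← integral_Ioc_eq_integral_Ioo]
    field_simp
    ring
  calc (1 / Real.sqrt π) *
        ∫ t in (-1 : ℝ)..y, Real.exp (1 + t) * erfc (Real.sqrt (1 + t)) / Real.sqrt (y - t)
      = (1 / Real.sqrt π) * ∫ t in Set.Ioo (-1:ℝ) y,
          Real.exp (1 + t) * erfc (Real.sqrt (1 + t)) / Real.sqrt (y - t) := by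
        rw [intervalIntegral.integral_of_le hy.le, integral_Ioc_eq_integral_Ioo]
    _ = (1 / Real.sqrt π) * ∫ τ in Set.Ioo (0:ℝ) R,
          (2*Real.exp (1+y)*Real.exp (-τ^2)
            - 4/Real.sqrt π*Real.exp (1+y)*(Real.exp (-τ^2) * W τ)) := by
        rw [hcv, setIntegral_congr_fun measurableSet_Ioo hpt]
    _ = (1 / Real.sqrt π) * (2*Real.exp (1+y)*(Real.sqrt π / 2 - Real.sqrt π / 2 * erfc R)
          - 4/Real.sqrt π*Real.exp (1+y)*(π/4 * (1 - Real.exp (-R^2)))) := by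
        rw [integral_sub hint1 hint2, MeasureTheory.integral_const_mul, MeasureTheory.integral_const_mul, hA]
        have hQ : ∫ τ in Set.Ioo (0:ℝ) R, Real.exp (-τ^2) * W τ
            = π/4 * (1 - Real.exp (-R^2)) := quarter R hR0
        rw [hQ]
    _ = 1 - Real.exp (1 + y) * erfc R := by
        have he : Real.exp (-R^2) = Real.exp (-(1+y)) := by rw [hR2]
        have he2 : Real.exp (1+y) * Real.exp (-(1+y)) = 1 := by
          rw [← Real.exp_add, add_neg_cancel, Real.exp_zero]
        rw [he, Real.exp_neg, ← hππ]
        have hE := Real.exp_ne_zero (1+y)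
        field_simp
        ring_nf
        rw [Real.sq_sqrt Real.pi_pos.le]
        ring_nf; simp only [Real.sq_sqrt Real.pi_pos.le]; ring
        


theorem stmt16 (x : ℝ) (hx : x ∈ Set.Ioo (-1 : ℝ) 1) :
    HasDerivAt
      (fun y => (1 / Real.sqrt π) *
        ∫ t in (-1 : ℝ)..y, Real.exp (1 + t) * erfc (Real.sqrt (1 + t)) / Real.sqrt (y - t))
      (1 / (Real.sqrt π * Real.sqrt (1 + x))
        - Real.exp (1 + x) * erfc (Real.sqrt (1 + x))) x := by
  obtain ⟨hx1, hx2⟩ := hx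
  have h1x : (0:ℝ) < 1 + x := by linarith
  have hRpos : 0 < Real.sqrt (1 + x) := Real.sqrt_pos.2 h1x
  -- derivative of 1 - exp(1+y) * erfc (sqrt (1+y))
  have hsqrt : HasDerivAt (fun y : ℝ => Real.sqrt (1 + y)) (1 / (2 * Real.sqrt (1 + x))) x := by
    have h0 : HasDerivAt (fun y : ℝ => 1 + y) 1 x := by
      simpa using (hasDerivAt_id x).const_add (1:ℝ)
    simpa using! (Real.hasDerivAt_sqrt (ne_of_gt h1x)).comp x h0
  have herfc : HasDerivAt (fun y : ℝ => erfc (Real.sqrt (1 + y)))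
      (-(2 / Real.sqrt π) * Real.exp (-(Real.sqrt (1+x))^2) * (1 / (2 * Real.sqrt (1 + x)))) x :=
    HasDerivAt.comp (h₂ := erfc) x (hasDerivAt_erfc hRpos) hsqrt
  have hexp : HasDerivAt (fun y : ℝ => Real.exp (1 + y)) (Real.exp (1 + x)) x := by
    have h0 : HasDerivAt (fun y : ℝ => 1 + y) 1 x := by
      simpa using (hasDerivAt_id x).const_add (1:ℝ)
    simpa using! (Real.hasDerivAt_exp (1+x)).comp x h0
  have hmul := hexp.mul herfc
  have hG : HasDerivAt (fun y : ℝ => 1 - Real.exp (1 + y) * erfc (Real.sqrt (1 + y)))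
      (1 / (Real.sqrt π * Real.sqrt (1 + x))
        - Real.exp (1 + x) * erfc (Real.sqrt (1 + x))) x := by
    have := hmul.const_sub (1:ℝ)
    refine this.congr_deriv ?_
    rw [Real.sq_sqrt h1x.le]
    rw [show Real.exp (1+x) * (-(2 / Real.sqrt π) * Real.exp (-(1+x)) * (1 / (2 * Real.sqrt (1 + x))))
      = -(Real.exp (1+x) * Real.exp (-(1+x))) * (1 / (Real.sqrt π * Real.sqrt (1+x))) by ring]
    rw [← Real.exp_add, add_neg_cancel, Real.exp_zero]
    ring
  refine hG.congr_of_eventuallyEq ?_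
  refine Filter.eventuallyEq_of_mem (isOpen_Ioi.mem_nhds (show x ∈ Set.Ioi (-1:ℝ) from hx1)) ?_
  intro y hy
  exact (key y hy).trans rfl
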